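/- For every m ≥ 1, the Bernoulli-Carlitz numbers satisfy BC_m = (−1)^m Π(m) · det A, where A is the m×m lower Hessenberg matrix over k with entries A_{i,j} = δ*_{i−j+1} for 1 ≤ j ≤ i ≤ m, A_{i,i+1} = 1 for 1 ≤ i ≤ m−1, and A_{i,j} = 0 for j > i+1; here δ*_e = 1/D_n if e = r^n − 1 for some nonnegative integer n, and δ*_e = 0 otherwise. -/

import Mathlib

noncomputable section

/-- The Carlitz bracket `[i] = T^(r^i) - T` in `k = 𝔽_r(T)`, where `r = |Fq|`. -/
def carlitzBracket (Fq : Type*) [Field Fq] [Fintype Fq] (i : ℕ) : RatFunc Fq :=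
  RatFunc.X ^ (Fintype.card Fq) ^ i - RatFunc.X

/-- `D_0 = 1`, `D_i = [i]·[i-1]^r ⋯ [1]^(r^(i-1))`, via `D_{i+1} = [i+1] * D_i ^ r`. -/
def carlitzD (Fq : Type*) [Field Fq] [Fintype Fq] : ℕ → RatFunc Fq
  | 0 => 1
  | i + 1 => carlitzBracket Fq (i + 1) * carlitzD Fq i ^ Fintype.card Fq

/-- The Carlitz factorial `Π(n) = ∏_j D_j ^ c_j`, where `n = ∑_j c_j r^j` is the base-`r`
expansion of `n`. -/
def carlitzPi (Fq : Type*) [Field Fq] [Fintype Fq] (n : ℕ) : RatFunc Fq :=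
  ∏ j ∈ Finset.range (n + 1),
    carlitzD Fq j ^ ((Nat.digits (Fintype.card Fq) n).getD j 0)

/-- `δ*_e = 1/D_n` if `e = r^n - 1` for some nonnegative integer `n`, and `0` otherwise.
(Note that `e + 1` is a power of `r` iff `r ^ log_r (e+1) = e + 1`, and then
`n = log_r (e+1)` is unique.) -/
def deltaStar (Fq : Type*) [Field Fq] [Fintype Fq] (e : ℕ) : RatFunc Fq :=
  if (Fintype.card Fq) ^ (Nat.log (Fintype.card Fq) (e + 1)) = e + 1 then
    (carlitzD Fq (Nat.log (Fintype.card Fq) (e + 1)))⁻¹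
  else 0

/-- The Bernoulli-Carlitz numbers, defined by `z/e_C(z) = ∑_n (BC_n/Π(n)) z^n`, where
`e_C(z)/z = ∑_e δ*_e z^e`. -/
def bernoulliCarlitz (Fq : Type*) [Field Fq] [Fintype Fq] (n : ℕ) : RatFunc Fq :=
  carlitzPi Fq n * PowerSeries.coeff (R := RatFunc Fq) n (PowerSeries.mk (deltaStar Fq))⁻¹

lemma deltaStar_zero (Fq : Type*) [Field Fq] [Fintype Fq] : deltaStar Fq 0 = 1 := by
  simp [deltaStar, carlitzD]

open Matrix Finset in
lemma coeff_inv_eq_det (Fq : Type*) [Field Fq] [Fintype Fq] (n : ℕ) :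
    PowerSeries.coeff (R := RatFunc Fq) (n + 1) (PowerSeries.mk (deltaStar Fq))⁻¹ =
      (-1 : RatFunc Fq) ^ (n + 1) *
      Matrix.det (Matrix.of fun i j : Fin (n + 1) =>
        if (j : ℕ) = (i : ℕ) + 1 then 1
        else if (j : ℕ) ≤ (i : ℕ) then deltaStar Fq ((i : ℕ) - (j : ℕ) + 1)
        else 0) := by
  set a : ℕ → RatFunc Fq := deltaStar Fq with ha
  set f : PowerSeries (RatFunc Fq) := PowerSeries.mk a with hf
  set b : ℕ → RatFunc Fq := fun e => PowerSeries.coeff (R := RatFunc Fq) e f⁻¹ with hb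
  have hconst : PowerSeries.constantCoeff (R := RatFunc Fq) f ≠ 0 := by
    rw [hf, PowerSeries.constantCoeff_mk, ha, deltaStar_zero]; exact one_ne_zero
  set T : Matrix (Fin (n + 2)) (Fin (n + 2)) (RatFunc Fq) :=
    Matrix.of (fun i j : Fin (n + 2) =>
      if (j : ℕ) ≤ (i : ℕ) then a ((i : ℕ) - (j : ℕ)) else 0) with hT
  -- T is lower triangular with 1's on the diagonal
  have hTtri : T.BlockTriangular OrderDual.toDual := by
    intro i j hij
    simp only [OrderDual.toDual_lt_toDual] at hij
    simp only [hT, Matrix.of_apply]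
    rw [if_neg (not_le.mpr (Fin.lt_iff_val_lt_val.mp hij))]
  have hTdet : T.det = 1 := by
    rw [Matrix.det_of_lowerTriangular T hTtri]
    simp [hT, ha, deltaStar_zero]
  -- T *ᵥ b = e₀
  have hTb : T *ᵥ (fun j : Fin (n + 2) => b j) = Pi.single (0 : Fin (n + 2)) 1 := by
    funext i
    have h1 : (f⁻¹ * f) = 1 := PowerSeries.inv_mul_cancel f hconst
    have h2 : PowerSeries.coeff (R := RatFunc Fq) i (f⁻¹ * f) =
        ∑ k ∈ range ((i : ℕ) + 1), b k * a ((i : ℕ) - k) := by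
      rw [PowerSeries.coeff_mul, Finset.Nat.sum_antidiagonal_eq_sum_range_succ_mk]
      simp [hb, hf, PowerSeries.coeff_mk]
    have h3 : (T *ᵥ fun j : Fin (n + 2) => b j) i =
        ∑ k ∈ range ((i : ℕ) + 1), b k * a ((i : ℕ) - k) := by
      simp only [Matrix.mulVec, dotProduct, hT, Matrix.of_apply]
      rw [Fin.sum_univ_eq_sum_range (fun k =>
        (if k ≤ (i : ℕ) then a ((i : ℕ) - k) else 0) * b k)]
      rw [← Finset.sum_subset (Finset.range_subset_range.mpr (Nat.succ_le_succ i.is_le))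
        (fun x _ hx => by
          rw [if_neg (by simp only [Finset.mem_range, not_lt] at hx; omega), zero_mul])]
      exact Finset.sum_congr rfl fun k hk => by
        rw [Finset.mem_range] at hk
        rw [if_pos (by omega), mul_comm]
    rw [h3, ← h2, h1, PowerSeries.coeff_one, Pi.single_apply]
    by_cases h : i = 0
    · subst h; rw [if_pos (Fin.val_zero (n + 2)), if_pos rfl]
    · rw [if_neg h, if_neg (fun h' => h (Fin.ext (h'.trans (Fin.val_zero (n + 2)).symm)))]
  -- extract b (n+1) via the adjugate
  have hbv : (fun j : Fin (n + 2) => b j) = Matrix.adjugate T *ᵥ Pi.single (0 : Fin (n + 2)) 1 := by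
    rw [← hTb, Matrix.mulVec_mulVec, Matrix.adjugate_mul, hTdet, one_smul, Matrix.one_mulVec]
  have hbn : b (n + 1) = Matrix.adjugate T (Fin.last (n + 1)) 0 := by
    have := congrFun hbv (Fin.last (n + 1))
    simpa [Fin.val_last] using this
  -- compute the adjugate entry by expanding along the first row
  have hadj : Matrix.adjugate T (Fin.last (n + 1)) 0 =
      (-1 : RatFunc Fq) ^ (n + 1) *
      Matrix.det ((T.updateRow 0 (Pi.single (Fin.last (n + 1)) 1)).submatrix
        Fin.succ (Fin.last (n + 1)).succAbove) := by
    rw [Matrix.adjugate_apply, Matrix.det_succ_row_zero]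
    rw [Finset.sum_eq_single (Fin.last (n + 1))]
    · simp [Matrix.updateRow_self, Pi.single_apply]
    · intro j _ hj
      simp [Matrix.updateRow_self, Pi.single_apply, hj]
    · simp
  have hsub : (T.updateRow 0 (Pi.single (Fin.last (n + 1)) 1)).submatrix
        Fin.succ (Fin.last (n + 1)).succAbove =
      Matrix.of (fun i j : Fin (n + 1) =>
        if (j : ℕ) = (i : ℕ) + 1 then 1
        else if (j : ℕ) ≤ (i : ℕ) then a ((i : ℕ) - (j : ℕ) + 1)
        else 0) := by
    ext i j
    rw [Matrix.submatrix_apply, Fin.succAbove_last,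
      Matrix.updateRow_ne (Fin.succ_ne_zero i)]
    simp only [hT, Matrix.of_apply, Fin.val_succ, Fin.coe_castSucc]
    rcases Nat.lt_trichotomy (j : ℕ) ((i : ℕ) + 1) with h | h | h
    · rw [if_pos (by omega), if_neg (by omega), if_pos (by omega)]
      congr 1
      omega
    · rw [if_pos (by omega), if_pos h]
      rw [show (i : ℕ) + 1 - (j : ℕ) = 0 by omega, ha, deltaStar_zero]
    · rw [if_neg (by omega), if_neg (by omega), if_neg (by omega)]
  rw [hsub] at hadj
  rw [show (PowerSeries.coeff (R := RatFunc Fq) (n + 1)) f⁻¹ = b (n + 1) from rfl, hbn, hadj]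

/-- **Determinant expression of Bernoulli-Carlitz numbers.**  For every `m ≥ 1`,
`BC_m = (-1)^m Π(m) det A`, where `A` is the `m × m` lower Hessenberg matrix with entries
`A_{i,j} = δ*_{i-j+1}` for `j ≤ i`, `A_{i,i+1} = 1`, and `A_{i,j} = 0` otherwise. -/
theorem bernoulliCarlitz_det (Fq : Type*) [Field Fq] [Fintype Fq]
    (m : ℕ) (hm : 1 ≤ m) :
    bernoulliCarlitz Fq m = (-1 : RatFunc Fq) ^ m * carlitzPi Fq m *
      Matrix.det (Matrix.of fun i j : Fin m =>
        if (j : ℕ) = (i : ℕ) + 1 then 1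
        else if (j : ℕ) ≤ (i : ℕ) then deltaStar Fq ((i : ℕ) - (j : ℕ) + 1)
        else 0) := by
  obtain ⟨n, rfl⟩ : ∃ n, m = n + 1 := ⟨m - 1, (Nat.succ_pred_eq_of_pos hm).symm⟩
  rw [bernoulliCarlitz, coeff_inv_eq_det]
  ring
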